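/- arXiv:1508.02430 — 2 statements merged into one kernel-verified Lean document; each statement's English description precedes it below -/
import Mathlib

section
/- The number of morphisms from [m] to [n] in the category of noncommutative finite sets equals the rising factorial n(n+1)(n+2)⋯(n+m−1). Equivalently, the number of pairs (f, orders) where f : Fin m → Fin n is a function and each fiber f⁻¹(j) carries a linear order equals ∏_{i=0}^{m−1} (n+i). -/
/-- A morphism in the category `N` of noncommutative finite sets from `Fin m` to
`Fin n`: a function together with a linear order on each fiber. -/
def NHom (m n : ℕ) : Type :=
  Σ f : Fin m → Fin n, ∀ j : Fin n,
    { r : {i : Fin m // f i = j} → {i : Fin m // f i = j} → Prop //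
      IsLinearOrder {i : Fin m // f i = j} r }

section Orders

variable {α : Type*} [Fintype α]

/-- From an equivalence with `Fin k` we get a linear order. -/
noncomputable def ordersMap {k : ℕ} (e : α ≃ Fin k) :
    { r : α → α → Prop // IsLinearOrder α r } := by
  refine ⟨fun a b => e a ≤ e b,
    { refl := fun a => le_refl _
      trans := fun a b c hab hbc => le_trans hab hbc
      antisymm := fun a b hab hba => e.injective (le_antisymm hab hba)
      total := fun a b => le_total _ _ }⟩

theorem ordersMap_bijective {k : ℕ} (hk : Fintype.card α = k) :
    Function.Bijective (ordersMap (α := α) (k := k)) := by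
  constructor
  · intro e₁ e₂ h
    have hr : ∀ a b : α, (e₁ a ≤ e₁ b) = (e₂ a ≤ e₂ b) := by
      intro a b
      have := congrArg Subtype.val h
      exact congrFun (congrFun this a) b
    -- the composite `e₁.symm.trans e₂ : Fin k ≃ Fin k` is an order iso, hence the identity
    have hmono : ∀ x y : Fin k, (e₁.symm.trans e₂) x ≤ (e₁.symm.trans e₂) y ↔ x ≤ y := by
      intro x y
      simp only [Equiv.trans_apply]
      rw [← hr (e₁.symm x) (e₁.symm y)]
      simp
    have : (⟨e₁.symm.trans e₂, fun {x y} => hmono x y⟩ : Fin k ≃o Fin k) = OrderIso.refl _ :=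
      Subsingleton.elim _ _
    have h2 : ∀ x, e₂ (e₁.symm x) = x := fun x =>
      congrArg (fun (oi : Fin k ≃o Fin k) => oi x) this
    ext a
    have := h2 (e₁ a)
    rw [Equiv.symm_apply_apply] at this
    rw [this]
  · rintro ⟨r, hr⟩
    haveI := hr
    letI : LinearOrder α :=
      { le := r
        le_refl := fun a => refl_of r a
        le_trans := fun a b c => trans_of r
        le_antisymm := fun a b => antisymm_of r
        le_total := fun a b => total_of r a b
        toDecidableLE := fun a b => Classical.dec _ }
    refine ⟨(monoEquivOfFin α hk).symm.toEquiv, ?_⟩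
    apply Subtype.ext
    funext a b
    apply propext
    show (monoEquivOfFin α hk).symm a ≤ (monoEquivOfFin α hk).symm b ↔ r a b
    exact (monoEquivOfFin α hk).symm.le_iff_le

/-- Linear orders on a finite type are in bijection with enumerations. -/
noncomputable def ordersEquiv :
    { r : α → α → Prop // IsLinearOrder α r } ≃ (α ≃ Fin (Fintype.card α)) :=
  (Equiv.ofBijective _ (ordersMap_bijective rfl)).symm

end Orders

theorem card_fiber_cons {m n : ℕ} (a : Fin n) (g : Fin m → Fin n) (j : Fin n) :
    Fintype.card {i : Fin (m + 1) // (Fin.cons a g : Fin (m + 1) → Fin n) i = j} =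
      (if a = j then 1 else 0) + Fintype.card {i : Fin m // g i = j} := by
  classical
  rw [Fintype.card_subtype (p := fun i : Fin (m + 1) => (Fin.cons a g : Fin (m + 1) → Fin n) i = j),
    Fintype.card_subtype (p := fun i : Fin m => g i = j),
    Finset.card_filter, Finset.card_filter, Fin.sum_univ_succ]
  simp [Fin.cons_zero, Fin.cons_succ]

theorem sum_card_fiber {m n : ℕ} (g : Fin m → Fin n) :
    ∑ j : Fin n, Fintype.card {i : Fin m // g i = j} = m := by
  classical
  rw [← Fintype.card_sigma]
  simpa using Fintype.card_congr (Equiv.sigmaFiberEquiv g)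

theorem keySum (m n : ℕ) :
    ∑ f : Fin m → Fin n, ∏ j : Fin n, (Fintype.card {i : Fin m // f i = j}).factorial =
      ∏ i ∈ Finset.range m, (n + i) := by
  classical
  induction m with
  | zero => simp
  | succ m ih =>
    rw [← Equiv.sum_comp (Fin.consEquiv (fun _ : Fin (m + 1) => Fin n))
      (fun f => ∏ j : Fin n, (Fintype.card {i : Fin (m + 1) // f i = j}).factorial),
      Fintype.sum_prod_type_right]
    have key : ∀ (g : Fin m → Fin n) (a : Fin n),
        ∏ j : Fin n, (Fintype.card {i : Fin (m + 1) // (Fin.cons a g : Fin (m + 1) → Fin n) i = j}).factorial =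
          (Fintype.card {i : Fin m // g i = a} + 1) *
            ∏ j : Fin n, (Fintype.card {i : Fin m // g i = j}).factorial := by
      intro g a
      simp_rw [card_fiber_cons]
      rw [← Finset.mul_prod_erase Finset.univ _ (Finset.mem_univ a),
        ← Finset.mul_prod_erase Finset.univ
          (fun j => (Fintype.card {i : Fin m // g i = j}).factorial) (Finset.mem_univ a)]
      rw [if_pos rfl]
      have h1 : (1 + Fintype.card {i : Fin m // g i = a}).factorial =
          (Fintype.card {i : Fin m // g i = a} + 1) *
            (Fintype.card {i : Fin m // g i = a}).factorial := by
        rw [Nat.add_comm 1, Nat.factorial_succ]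
      rw [h1]
      rw [Finset.prod_congr rfl (fun j hj => by
        rw [if_neg (fun h => (Finset.mem_erase.mp hj).1 h.symm), Nat.zero_add])]
      ring
    calc ∑ g : Fin m → Fin n, ∑ a : Fin n,
          ∏ j : Fin n, (Fintype.card {i : Fin (m + 1) // (Fin.cons a g : Fin (m + 1) → Fin n) i = j}).factorial
        = ∑ g : Fin m → Fin n, (m + n) *
            ∏ j : Fin n, (Fintype.card {i : Fin m // g i = j}).factorial := by
          refine Finset.sum_congr rfl fun g _ => ?_
          rw [Finset.sum_congr rfl fun a _ => key g a, ← Finset.sum_mul]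
          congr 1
          rw [Finset.sum_add_distrib, sum_card_fiber]
          simp
      _ = (m + n) * ∑ g : Fin m → Fin n,
            ∏ j : Fin n, (Fintype.card {i : Fin m // g i = j}).factorial := by
          rw [Finset.mul_sum]
      _ = ∏ i ∈ Finset.range (m + 1), (n + i) := by
          rw [ih, Finset.prod_range_succ]
          ring

/-- the number of morphisms `[m] → [n]` in the category of
noncommutative finite sets is the rising factorial `n(n+1)⋯(n+m−1)`. -/
theorem stmt_2 (m n : ℕ) :
    Nat.card (NHom m n) = ∏ i ∈ Finset.range m, (n + i) := by
  classical
  have e : NHom m n ≃ Σ f : Fin m → Fin n, ∀ j : Fin n,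
      ({i : Fin m // f i = j} ≃ Fin (Fintype.card {i : Fin m // f i = j})) :=
    Equiv.sigmaCongrRight fun f => Equiv.piCongrRight fun j => ordersEquiv
  rw [Nat.card_congr e, Nat.card_eq_fintype_card, Fintype.card_sigma, ← keySum m n]
  refine Finset.sum_congr rfl fun f _ => ?_
  rw [Fintype.card_pi]
  refine Finset.prod_congr rfl fun j _ => ?_
  exact Fintype.card_equiv (Fintype.equivFin _)
end

section
/- There is a faithful functor ψ from the simplex category Δ to the category of noncommutative finite sets: every weakly monotone map f : [q] → [n] between nonempty finite linear orders has each fiber f⁻¹(j) an interval, which inherits a linear order from [q], and these inherited fiber orders are compatible with composition (the lexicographic composite order on fibers of g ∘ f agrees with the order inherited from the domain). -/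
/-- every weakly monotone map between nonempty finite linear orders has
interval fibers, which inherit a linear order from the domain, and these inherited
fiber orders are compatible with composition: the lexicographic composite order on
the fibers of `g ∘ f` agrees with the order inherited from the domain.  (This gives
the faithful functor `ψ : Δ → N`; faithfulness is clear since a morphism of `N` is
determined by its underlying map together with the fiber orders.) -/
theorem stmt_6 {q n m : ℕ} (f : Fin (q + 1) → Fin (n + 1))
    (g : Fin (n + 1) → Fin (m + 1)) (hf : Monotone f) (hg : Monotone g) :
    -- each fiber of a monotone map is an interval
    (∀ j : Fin (n + 1), ∀ a b c : Fin (q + 1),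
      f a = j → f c = j → a ≤ b → b ≤ c → f b = j) ∧
    -- the lexicographic composite of the inherited fiber orders agrees with the
    -- order inherited from the domain on each fiber of `g ∘ f`
    (∀ z : Fin (m + 1), ∀ x x' : Fin (q + 1),
      g (f x) = z → g (f x') = z →
      (((f x ≤ f x' ∧ f x ≠ f x') ∨ (f x = f x' ∧ x ≤ x')) ↔ x ≤ x')) := by
  constructor
  · intro j a b c ha hc hab hbc
    exact le_antisymm (hc ▸ hf hbc) (ha ▸ hf hab)
  · intro z x x' _ _
    constructor
    · rintro (⟨hle, hne⟩ | ⟨_, hle⟩)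
      · by_contra h
        exact hne (le_antisymm hle (hf (le_of_not_ge h)))
      · exact hle
    · intro h
      rcases eq_or_ne (f x) (f x') with he | hne
      · exact Or.inr ⟨he, h⟩
      · exact Or.inl ⟨hf h, hne⟩
end
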